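/- In a one-dimensional quasi-local integral domain D, if a and b are two non-associate atoms, then a ∤ b and yet (a,b)_v ≠ D. -/

import Mathlib

/-- Membership in the divisorial closure `A_v` of an ideal `A` of a domain `D`:
`A_v` is the intersection of all nonzero principal fractional ideals `(d/c)D`
containing `A`.  Here `x ∈ (d/c)D` is expressed as `d ∣ c * x`.
Note `(a,b)_v = D` if and only if `VMem (span {a,b}) 1`. -/
def VMem {D : Type*} [CommRing D] (A : Ideal D) (x : D) : Prop :=
  ∀ c d : D, c ≠ 0 → d ≠ 0 → (∀ a ∈ A, d ∣ c * a) → d ∣ c * x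

/-- In a 1-dimensional local domain, every nonzero prime is the maximal ideal. -/
lemma prime_eq_max {D : Type*} [CommRing D] [IsDomain D] [IsLocalRing D]
    (hdim : ringKrullDim D = 1) (p : Ideal D) (hp : p.IsPrime) (hp0 : p ≠ ⊥) :
    p = IsLocalRing.maximalIdeal D := by
  by_contra hne
  have hle : p ≤ IsLocalRing.maximalIdeal D := IsLocalRing.le_maximalIdeal hp.ne_top
  have hlt : p < IsLocalRing.maximalIdeal D := lt_of_le_of_ne hle hne
  have hbot : (⊥ : Ideal D) < p := bot_lt_iff_ne_bot.mpr hp0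
  let P0 : PrimeSpectrum D := ⟨⊥, Ideal.bot_prime⟩
  let P1 : PrimeSpectrum D := ⟨p, hp⟩
  let P2 : PrimeSpectrum D := ⟨IsLocalRing.maximalIdeal D,
    (IsLocalRing.maximalIdeal.isMaximal D).isPrime⟩
  have h01 : P0 < P1 := hbot
  have h12 : P1 < P2 := hlt
  let s : LTSeries (PrimeSpectrum D) :=
    (RelSeries.singleton _ P0).snoc P1 h01 |>.snoc P2 (by
      exact h12)
  have hlen : (s.length : WithBot (WithTop ℕ)) ≤ ringKrullDim D :=
    Order.LTSeries.length_le_krullDim s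
  rw [hdim] at hlen
  have : s.length = 2 := rfl
  rw [this] at hlen
  exact absurd hlen (by norm_cast)

theorem stmt7 (D : Type*) [CommRing D] [IsDomain D] [IsLocalRing D]
    (hdim : ringKrullDim D = 1)
    (a b : D) (ha : Irreducible a) (hb : Irreducible b) (hab : ¬ Associated a b) :
    ¬ a ∣ b ∧ ¬ VMem (Ideal.span ({a, b} : Set D)) 1 := by
  have ha0 : a ≠ 0 := ha.ne_zero
  have hb0 : b ≠ 0 := hb.ne_zero
  have hadvd : ¬ a ∣ b := fun h => hab (ha.associated_of_dvd hb h)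
  refine ⟨hadvd, ?_⟩
  -- b ∈ radical (a), so a ∣ b^n for some n
  have hrad : b ∈ (Ideal.span {a} : Ideal D).radical := by
    rw [Ideal.radical_eq_sInf]
    refine Ideal.mem_sInf.mpr ?_
    rintro J ⟨hJle, hJprime⟩
    have hJ0 : J ≠ ⊥ := by
      intro h
      have : a ∈ J := hJle (Ideal.subset_span rfl)
      rw [h] at this
      exact ha0 (Ideal.mem_bot.mp this)
    rw [prime_eq_max hdim J hJprime hJ0]
    exact (IsLocalRing.mem_maximalIdeal b).mpr hb.not_isUnit
  obtain ⟨n, hn⟩ := Ideal.mem_radical_iff.mp hrad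
  have hdvd : ∃ m, a ∣ b ^ m := ⟨n, Ideal.mem_span_singleton.mp hn⟩
  classical
  set N := Nat.find hdvd with hN
  have hNd : a ∣ b ^ N := Nat.find_spec hdvd
  have hN0 : N ≠ 0 := by
    intro h
    rw [h, pow_zero] at hNd
    exact ha.not_isUnit (isUnit_of_dvd_one hNd)
  have hNmin : ¬ a ∣ b ^ (N - 1) := Nat.find_min hdvd (by omega)
  intro hV
  have h1 := hV (b ^ N) (a * b) (pow_ne_zero _ hb0) (mul_ne_zero ha0 hb0) ?_
  · rw [mul_one] at h1
    obtain ⟨s, hs⟩ := h1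
    apply hNmin
    refine ⟨s, ?_⟩
    have hb' : b ^ N = b ^ (N - 1) * b := by
      conv_lhs => rw [show N = (N - 1) + 1 by omega]
      rw [pow_succ]
    rw [hb'] at hs
    have : b ^ (N - 1) * b = (a * s) * b := by ring_nf; ring_nf at hs; linear_combination hs
    exact mul_right_cancel₀ hb0 this
  · intro x hx
    induction hx using Submodule.span_induction with
    | mem y hy =>
      have hb' : b ^ N = b ^ (N - 1) * b := by
        conv_lhs => rw [show N = (N - 1) + 1 by omega]
        rw [pow_succ]
      rcases hy with rfl | rfl
      · exact ⟨b ^ (N - 1), by rw [hb']; ring⟩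
      · obtain ⟨t, ht⟩ := hNd
        exact ⟨t, by rw [ht]; ring⟩
    | zero => exact ⟨0, by ring⟩
    | add y z _ _ hy hz =>
      obtain ⟨u, hu⟩ := hy; obtain ⟨v, hv⟩ := hz
      exact ⟨u + v, by rw [mul_add, hu, hv]; ring⟩
    | smul r y _ hy =>
      obtain ⟨u, hu⟩ := hy
      exact ⟨r * u, by rw [smul_eq_mul, show b ^ N * (r * y) = r * (b ^ N * y) by ring, hu]; ring⟩
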